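/- Let t ≥ 2 and n = 2^{t-1} - 1. Then the matrix A_{(t-1)} is invertible over F_2 and the Jordan block J_n satisfies J_n = A_{(t-1)}·(A_{(t-1)}^{-1})ᵀ. -/

import Mathlib

/-- The unipotent Jordan block of size `n` over `F₂`: `1`'s on the main diagonal
and on the superdiagonal, `0`'s elsewhere. -/
def Jmat (n : ℕ) : Matrix (Fin n) (Fin n) (ZMod 2) :=
  fun i j => if (j : ℕ) = (i : ℕ) ∨ (j : ℕ) = (i : ℕ) + 1 then 1 else 0

/-- The `s`-fold Kronecker power of the `2 × 2` matrix `[[1,1],[1,0]]` over `F₂`. -/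
def kronPow : (s : ℕ) → Matrix (Fin (2 ^ s)) (Fin (2 ^ s)) (ZMod 2)
  | 0 => 1
  | s + 1 =>
      Matrix.reindex (finProdFinEquiv.trans (finCongr (by ring)))
        (finProdFinEquiv.trans (finCongr (by ring)))
        (Matrix.kroneckerMap (· * ·)
          (!![1, 1; 1, 0] : Matrix (Fin 2) (Fin 2) (ZMod 2)) (kronPow s))

/-- The matrix `A_{(s)}`: the `(2^s - 1) × (2^s - 1)` matrix obtained from the
`s`-fold Kronecker power of `[[1,1],[1,0]]` by deleting its first row and its
last column. -/
def Amat (s : ℕ) : Matrix (Fin (2 ^ s - 1)) (Fin (2 ^ s - 1)) (ZMod 2) :=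
  (kronPow s).submatrix
    (fun i => Fin.cast (Nat.sub_add_cancel Nat.one_le_two_pow) i.succ)
    (fun j => Fin.cast (Nat.sub_add_cancel Nat.one_le_two_pow) j.castSucc)

/-! ### Auxiliary bitwise lemmas -/

lemma land_arith (x y : ℕ) :
    x &&& y = 2 * (x / 2 &&& y / 2) + (if x % 2 = 1 ∧ y % 2 = 1 then 1 else 0) := by
  conv_lhs => rw [← Nat.bit_bodd_div2 x, ← Nat.bit_bodd_div2 y]
  rw [Nat.land_bit, Nat.bit_val, Nat.div2_val, Nat.div2_val, Nat.mod_two_of_bodd,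
    Nat.mod_two_of_bodd]
  cases Nat.bodd x <;> cases Nat.bodd y <;> simp

lemma lor_arith (x y : ℕ) :
    x ||| y = 2 * (x / 2 ||| y / 2) + (if x % 2 = 1 ∨ y % 2 = 1 then 1 else 0) := by
  conv_lhs => rw [← Nat.bit_bodd_div2 x, ← Nat.bit_bodd_div2 y]
  rw [Nat.lor_bit, Nat.bit_val, Nat.div2_val, Nat.div2_val, Nat.mod_two_of_bodd,
    Nat.mod_two_of_bodd]
  cases Nat.bodd x <;> cases Nat.bodd y <;> simp

lemma landz_even (a k : ℕ) : a &&& (2 * k) = 0 ↔ a / 2 &&& k = 0 := by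
  have h := land_arith a (2 * k)
  rw [Nat.mul_div_cancel_left _ two_pos, Nat.mul_mod_right] at h
  simp only [Nat.zero_ne_one, and_false, if_false] at h
  omega

lemma landz_odd (a k : ℕ) : a &&& (2 * k + 1) = 0 ↔ a / 2 &&& k = 0 ∧ a % 2 = 0 := by
  have h := land_arith a (2 * k + 1)
  rw [Nat.mul_add_div two_pos, Nat.mul_add_mod] at h
  norm_num at h
  rcases Nat.mod_two_eq_zero_or_one a with ha | ha <;> simp [ha] at h ⊢ <;> omega

lemma lorf_even (s b k : ℕ) :
    b ||| (2 * k) = 2 ^ (s + 1) - 1 ↔ (b / 2 ||| k = 2 ^ s - 1 ∧ b % 2 = 1) := by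
  have h := lor_arith b (2 * k)
  rw [Nat.mul_div_cancel_left _ two_pos, Nat.mul_mod_right] at h
  have h2 : 2 ^ (s + 1) = 2 * 2 ^ s := by rw [pow_succ, mul_comm]
  have h3 : (1:ℕ) ≤ 2 ^ s := Nat.one_le_two_pow
  rcases Nat.mod_two_eq_zero_or_one b with hb | hb <;> simp [hb] at h ⊢ <;> omega

lemma lorf_odd (s b k : ℕ) :
    b ||| (2 * k + 1) = 2 ^ (s + 1) - 1 ↔ b / 2 ||| k = 2 ^ s - 1 := by
  have h := lor_arith b (2 * k + 1)
  rw [Nat.mul_add_div two_pos, Nat.mul_add_mod] at h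
  norm_num at h
  have h2 : 2 ^ (s + 1) = 2 * 2 ^ s := by rw [pow_succ, mul_comm]
  have h3 : (1:ℕ) ≤ 2 ^ s := Nat.one_le_two_pow
  omega

lemma land_ones {s a : ℕ} (h : a < 2 ^ s) : a &&& (2 ^ s - 1) = a := by
  rw [Nat.and_two_pow_sub_one_eq_mod, Nat.mod_eq_of_lt h]

lemma landz (x y : ℕ) : x &&& y = 0 ↔ (x / 2 &&& y / 2 = 0 ∧ (x % 2 = 0 ∨ y % 2 = 0)) := by
  have h := land_arith x y
  rcases Nat.mod_two_eq_zero_or_one x with hx | hx <;>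
    rcases Nat.mod_two_eq_zero_or_one y with hy | hy <;>
    simp only [hx, hy] at h ⊢ <;> norm_num at h ⊢ <;> omega

lemma sum_range_two_mul {M : Type*} [AddCommMonoid M] (m : ℕ) (f : ℕ → M) :
    ∑ k ∈ Finset.range (2 * m), f k = ∑ k ∈ Finset.range m, (f (2 * k) + f (2 * k + 1)) := by
  induction m with
  | zero => simp
  | succ m ih =>
      rw [show 2 * (m + 1) = 2 * m + 1 + 1 by ring, Finset.sum_range_succ,
        Finset.sum_range_succ, ih, Finset.sum_range_succ, add_assoc]

/-- Parity of the number of `k < 2^s` lying between the complement of `b` and the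
complement of `a` (as bit sets): it is odd exactly when `a = b`. -/
lemma L1 (s : ℕ) : ∀ a b : ℕ, a < 2 ^ s → b < 2 ^ s →
    (∑ k ∈ Finset.range (2 ^ s),
      (if a &&& k = 0 ∧ b ||| k = 2 ^ s - 1 then (1 : ZMod 2) else 0)) =
    if a = b then 1 else 0 := by
  induction s with
  | zero =>
      intro a b ha hb
      interval_cases a
      interval_cases b
      simp
  | succ s ih =>
      intro a b ha hb
      have hsplit := sum_range_two_mul (2 ^ s)
        (fun k => if a &&& k = 0 ∧ b ||| k = 2 ^ (s + 1) - 1 then (1 : ZMod 2) else 0)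
      rw [show 2 * 2 ^ s = 2 ^ (s + 1) by rw [pow_succ, mul_comm]] at hsplit
      rw [hsplit]
      simp only [landz_even, landz_odd, lorf_even, lorf_odd]
      rcases Nat.mod_two_eq_zero_or_one a with ha2 | ha2 <;>
        rcases Nat.mod_two_eq_zero_or_one b with hb2 | hb2
      · simp only [ha2, hb2, zero_ne_one, one_ne_zero, and_true, true_and, and_false,
          false_and, if_false, if_true, add_zero, zero_add, ite_false, ite_true]
        rw [ih (a / 2) (b / 2) (by omega) (by omega)]
        exact if_congr (by omega) rfl rfl
      · simp only [ha2, hb2, zero_ne_one, one_ne_zero, and_true, true_and, and_false,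
          false_and, if_false, if_true, add_zero, zero_add, ite_false, ite_true]
        rw [if_neg (by omega : ¬ a = b)]
        simp [CharTwo.add_self_eq_zero]
      · simp only [ha2, hb2, zero_ne_one, one_ne_zero, and_true, true_and, and_false,
          false_and, if_false, if_true, add_zero, zero_add, ite_false, ite_true]
        rw [if_neg (by omega : ¬ a = b)]
        simp
      · simp only [ha2, hb2, zero_ne_one, one_ne_zero, and_true, true_and, and_false,
          false_and, if_false, if_true, add_zero, zero_add, ite_false, ite_true]
        rw [ih (a / 2) (b / 2) (by omega) (by omega)]
        exact if_congr (by omega) rfl rfl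

/-- The key Jordan-block identity on bits. -/
lemma L2 : ∀ a : ℕ, 0 < a → ∀ c : ℕ,
    (if a &&& c = 0 then (1 : ZMod 2) else 0) + (if a &&& (c + 1) = 0 then 1 else 0) =
    if (c + 1) &&& (a - 1) = 0 then 1 else 0 := by
  intro a
  induction a using Nat.strong_induction_on with
  | _ a ih =>
    intro ha c
    rcases Nat.mod_two_eq_zero_or_one c with hc2 | hc2 <;>
      rcases Nat.mod_two_eq_zero_or_one a with ha2 | ha2
    · -- c even, a even (a/2 ≥ 1)
      obtain ⟨c', rfl⟩ : ∃ c', c = 2 * c' := ⟨c / 2, by omega⟩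
      obtain ⟨a', rfl⟩ : ∃ a', a = 2 * a' := ⟨a / 2, by omega⟩
      have ha' : 0 < a' := by omega
      have e1 : 2 * a' &&& 2 * c' = 0 ↔ a' &&& c' = 0 := by
        rw [landz_even, Nat.mul_div_cancel_left _ two_pos]
      have e2 : 2 * a' &&& (2 * c' + 1) = 0 ↔ a' &&& c' = 0 := by
        rw [landz_odd, Nat.mul_div_cancel_left _ two_pos, Nat.mul_mod_right]
        simp
      have e3 : ¬ ((2 * c' + 1) &&& (2 * a' - 1) = 0) := by
        rw [show 2 * a' - 1 = 2 * (a' - 1) + 1 by omega, Nat.land_comm,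
          landz_odd]
        simp [Nat.mul_add_mod]
      rw [if_neg e3]
      by_cases h : a' &&& c' = 0
      · rw [if_pos (e1.mpr h), if_pos (e2.mpr h)]; decide
      · rw [if_neg (fun hh => h (e1.mp hh)), if_neg (fun hh => h (e2.mp hh))]; decide
    · -- c even, a odd
      obtain ⟨c', rfl⟩ : ∃ c', c = 2 * c' := ⟨c / 2, by omega⟩
      obtain ⟨a', rfl⟩ : ∃ a', a = 2 * a' + 1 := ⟨a / 2, by omega⟩
      have e1 : (2 * a' + 1) &&& 2 * c' = 0 ↔ a' &&& c' = 0 := by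
        rw [landz_even, Nat.mul_add_div two_pos]
        norm_num
      have e2 : ¬ ((2 * a' + 1) &&& (2 * c' + 1) = 0) := by
        rw [landz_odd]
        simp [Nat.mul_add_mod]
      have e3 : (2 * c' + 1) &&& (2 * a' + 1 - 1) = 0 ↔ c' &&& a' = 0 := by
        rw [show 2 * a' + 1 - 1 = 2 * a' by omega, landz_even, Nat.mul_add_div two_pos]
        norm_num
      rw [if_neg e2, add_zero]
      by_cases h : a' &&& c' = 0
      · rw [if_pos (e1.mpr h), if_pos (e3.mpr (by rwa [Nat.land_comm]))]
      · rw [if_neg (fun hh => h (e1.mp hh)),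
          if_neg (fun hh => h (by rw [Nat.land_comm]; exact e3.mp hh))]
    · -- c odd, a even (a/2 ≥ 1): the inductive case
      obtain ⟨c', rfl⟩ : ∃ c', c = 2 * c' + 1 := ⟨c / 2, by omega⟩
      obtain ⟨a', rfl⟩ : ∃ a', a = 2 * a' := ⟨a / 2, by omega⟩
      have ha' : 0 < a' := by omega
      have e1 : 2 * a' &&& (2 * c' + 1) = 0 ↔ a' &&& c' = 0 := by
        rw [landz_odd, Nat.mul_div_cancel_left _ two_pos, Nat.mul_mod_right]
        simp
      have e2 : 2 * a' &&& (2 * c' + 1 + 1) = 0 ↔ a' &&& (c' + 1) = 0 := by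
        rw [show 2 * c' + 1 + 1 = 2 * (c' + 1) by omega, landz_even,
          Nat.mul_div_cancel_left _ two_pos]
      have e3 : (2 * c' + 1 + 1) &&& (2 * a' - 1) = 0 ↔ (c' + 1) &&& (a' - 1) = 0 := by
        rw [show 2 * a' - 1 = 2 * (a' - 1) + 1 by omega,
          show 2 * c' + 1 + 1 = 2 * (c' + 1) by omega, Nat.land_comm, landz_even,
          Nat.mul_add_div two_pos]
        norm_num
        rw [Nat.land_comm]
      have key := ih a' (by omega) ha' c'
      calc (if 2 * a' &&& (2 * c' + 1) = 0 then (1:ZMod 2) else 0) +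
            (if 2 * a' &&& (2 * c' + 1 + 1) = 0 then 1 else 0)
          = (if a' &&& c' = 0 then (1:ZMod 2) else 0) +
            (if a' &&& (c' + 1) = 0 then 1 else 0) := by
            rw [if_congr e1 rfl rfl, if_congr e2 rfl rfl]
        _ = if (c' + 1) &&& (a' - 1) = 0 then 1 else 0 := key
        _ = _ := (if_congr e3 rfl rfl).symm
    · -- c odd, a odd
      obtain ⟨c', rfl⟩ : ∃ c', c = 2 * c' + 1 := ⟨c / 2, by omega⟩
      obtain ⟨a', rfl⟩ : ∃ a', a = 2 * a' + 1 := ⟨a / 2, by omega⟩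
      have e1 : ¬ ((2 * a' + 1) &&& (2 * c' + 1) = 0) := by
        rw [landz_odd]
        simp [Nat.mul_add_mod]
      have e2 : (2 * a' + 1) &&& (2 * c' + 1 + 1) = 0 ↔ a' &&& (c' + 1) = 0 := by
        rw [show 2 * c' + 1 + 1 = 2 * (c' + 1) by omega, landz_even,
          Nat.mul_add_div two_pos]
        norm_num
      have e3 : (2 * c' + 1 + 1) &&& (2 * a' + 1 - 1) = 0 ↔ (c' + 1) &&& a' = 0 := by
        rw [show 2 * a' + 1 - 1 = 2 * a' by omega,
          show 2 * c' + 1 + 1 = 2 * (c' + 1) by omega, Nat.land_comm, landz_even,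
          Nat.mul_div_cancel_left _ two_pos, Nat.land_comm]
      rw [if_neg e1, zero_add]
      by_cases h : a' &&& (c' + 1) = 0
      · rw [if_pos (e2.mpr h), if_pos (e3.mpr (by rwa [Nat.land_comm]))]
      · rw [if_neg (fun hh => h (e2.mp hh)),
          if_neg (fun hh => h (by rw [Nat.land_comm]; exact e3.mp hh))]

lemma L3 (s : ℕ) : ∀ a b a' b' : ℕ, b < 2 ^ s → b' < 2 ^ s →
    ((2 ^ s * a + b) &&& (2 ^ s * a' + b') = 0 ↔ (a &&& a' = 0 ∧ b &&& b' = 0)) := by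
  induction s with
  | zero =>
      intro a b a' b' hb hb'
      interval_cases b
      interval_cases b'
      simp
  | succ s ih =>
      intro a b a' b' hb hb'
      have hp : (2:ℕ) ^ (s + 1) = 2 * 2 ^ s := by rw [pow_succ, mul_comm]
      have hd : (2 ^ (s + 1) * a + b) / 2 = 2 ^ s * a + b / 2 := by
        have : 2 ^ (s + 1) * a = 2 * (2 ^ s * a) := by rw [hp]; ring
        omega
      have hm : (2 ^ (s + 1) * a + b) % 2 = b % 2 := by
        have : 2 ^ (s + 1) * a = 2 * (2 ^ s * a) := by rw [hp]; ring
        omega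
      have hd' : (2 ^ (s + 1) * a' + b') / 2 = 2 ^ s * a' + b' / 2 := by
        have : 2 ^ (s + 1) * a' = 2 * (2 ^ s * a') := by rw [hp]; ring
        omega
      have hm' : (2 ^ (s + 1) * a' + b') % 2 = b' % 2 := by
        have : 2 ^ (s + 1) * a' = 2 * (2 ^ s * a') := by rw [hp]; ring
        omega
      rw [landz, hd, hd', hm, hm', ih a (b / 2) a' (b' / 2) (by omega) (by omega),
        landz b b']
      tauto

/-! ### Entries of `kronPow` and `Amat` -/

lemma kronPow_apply : ∀ (s : ℕ) (i j : Fin (2 ^ s)),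
    kronPow s i j = if (i : ℕ) &&& (j : ℕ) = 0 then 1 else 0 := by
  intro s
  induction s with
  | zero =>
      intro i j
      have hij : i = j := Fin.ext (by omega)
      have hj : (j : ℕ) &&& (j : ℕ) = 0 := by
        have : (j : ℕ) = 0 := by omega
        simp [this]
      rw [hij, show kronPow 0 = 1 from rfl, Matrix.one_apply_eq, if_pos hj]
  | succ s ih =>
      intro i j
      have hp : (2:ℕ) ^ (s + 1) = 2 * 2 ^ s := by rw [pow_succ, mul_comm]
      have hpos : 0 < (2:ℕ) ^ s := Nat.pow_pos (n := s) two_pos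
      have hil := i.isLt
      have hjl := j.isLt
      have h1 : (i:ℕ) / 2 ^ s < 2 := (Nat.div_lt_iff_lt_mul hpos).mpr (by omega)
      have h2 : (j:ℕ) / 2 ^ s < 2 := (Nat.div_lt_iff_lt_mul hpos).mpr (by omega)
      have h3 : (i:ℕ) % 2 ^ s < 2 ^ s := Nat.mod_lt _ hpos
      have h4 : (j:ℕ) % 2 ^ s < 2 ^ s := Nat.mod_lt _ hpos
      have hentry : kronPow (s + 1) i j =
          (!![1, 1; 1, 0] : Matrix (Fin 2) (Fin 2) (ZMod 2))
              ⟨(i:ℕ)/2^s, h1⟩ ⟨(j:ℕ)/2^s, h2⟩ *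
            kronPow s ⟨(i:ℕ)%2^s, h3⟩ ⟨(j:ℕ)%2^s, h4⟩ := rfl
      rw [hentry, ih]
      have hcond : ((i:ℕ) &&& (j:ℕ) = 0) ↔
          ((i:ℕ)/2^s &&& (j:ℕ)/2^s = 0 ∧ (i:ℕ)%2^s &&& (j:ℕ)%2^s = 0) := by
        conv_lhs => rw [← Nat.div_add_mod (i:ℕ) (2 ^ s), ← Nat.div_add_mod (j:ℕ) (2 ^ s)]
        exact L3 s _ _ _ _ h3 h4
      rw [if_congr hcond rfl rfl]
      have hiv : (i:ℕ)/2^s = 0 ∨ (i:ℕ)/2^s = 1 := by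
        rcases Nat.lt_or_ge ((i:ℕ)/2^s) 1 with h | h
        · exact Or.inl (Nat.lt_one_iff.mp h)
        · exact Or.inr (le_antisymm (Nat.lt_succ_iff.mp h1) h)
      have hjv : (j:ℕ)/2^s = 0 ∨ (j:ℕ)/2^s = 1 := by
        rcases Nat.lt_or_ge ((j:ℕ)/2^s) 1 with h | h
        · exact Or.inl (Nat.lt_one_iff.mp h)
        · exact Or.inr (le_antisymm (Nat.lt_succ_iff.mp h2) h)
      rcases hiv with hiv | hiv <;> rcases hjv with hjv | hjv <;>
          simp only [hiv, hjv, Fin.mk_zero, Fin.mk_one] <;>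
          simp only [Matrix.cons_val_zero, Matrix.cons_val_one, Matrix.head_cons,
            Matrix.cons_val', Matrix.empty_val', Matrix.cons_val_fin_one,
            Nat.zero_and, Nat.and_zero, Nat.and_self, one_mul, zero_mul] <;>
        (by_cases h : (i:ℕ)%2^s &&& (j:ℕ)%2^s = 0 <;> simp [h])

lemma Amat_apply (s : ℕ) (i j : Fin (2 ^ s - 1)) :
    Amat s i j = if ((i : ℕ) + 1) &&& (j : ℕ) = 0 then 1 else 0 := by
  show kronPow s _ _ = _
  rw [kronPow_apply]
  simp

/-- The inverse of `Amat s`. -/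
def Cmat (s : ℕ) : Matrix (Fin (2 ^ s - 1)) (Fin (2 ^ s - 1)) (ZMod 2) :=
  fun i j => if ((j : ℕ) + 1) ||| (i : ℕ) = 2 ^ s - 1 then 1 else 0

lemma AC (s : ℕ) : Amat s * Cmat s = 1 := by
  ext i j
  rw [Matrix.mul_apply, Matrix.one_apply]
  have hi := i.isLt
  have hj := j.isLt
  have h1 : (1:ℕ) ≤ 2 ^ s := Nat.one_le_two_pow
  have hi1 : (i:ℕ) + 1 < 2 ^ s ∨ (2:ℕ) ^ s - 1 = 0 := by omega
  rcases hi1 with hi1 | hz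
  swap
  · exact absurd hi (by omega)
  have hj1 : (j:ℕ) + 1 < 2 ^ s := by omega
  have hterm : ∀ k : Fin (2 ^ s - 1), Amat s i k * Cmat s k j =
      (fun m : ℕ => if ((i:ℕ) + 1) &&& m = 0 ∧ ((j:ℕ) + 1) ||| m = 2 ^ s - 1
        then (1 : ZMod 2) else 0) (k : ℕ) := by
    intro k
    rw [Amat_apply]
    show _ * (if ((j:ℕ) + 1) ||| (k:ℕ) = 2 ^ s - 1 then (1:ZMod 2) else 0) = _
    by_cases hP : ((i:ℕ) + 1) &&& (k:ℕ) = 0 <;>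
      by_cases hQ : ((j:ℕ) + 1) ||| (k:ℕ) = 2 ^ s - 1 <;> simp [hP, hQ]
  rw [Finset.sum_congr rfl (fun k _ => hterm k)]
  rw [Fin.sum_univ_eq_sum_range
    (fun m : ℕ => if ((i:ℕ) + 1) &&& m = 0 ∧ ((j:ℕ) + 1) ||| m = 2 ^ s - 1
      then (1 : ZMod 2) else 0) (2 ^ s - 1)]
  have hL := L1 s ((i:ℕ) + 1) ((j:ℕ) + 1) hi1 hj1
  have hsucc := Finset.sum_range_succ
    (fun m : ℕ => if ((i:ℕ) + 1) &&& m = 0 ∧ ((j:ℕ) + 1) ||| m = 2 ^ s - 1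
      then (1 : ZMod 2) else 0) (2 ^ s - 1)
  rw [show (2 ^ s - 1) + 1 = 2 ^ s by omega] at hsucc
  have hlast : (if ((i:ℕ) + 1) &&& (2 ^ s - 1) = 0 ∧
      ((j:ℕ) + 1) ||| (2 ^ s - 1) = 2 ^ s - 1 then (1 : ZMod 2) else 0) = 0 := by
    rw [if_neg]
    rintro ⟨hand, -⟩
    rw [land_ones hi1] at hand
    omega
  rw [hsucc, hlast, add_zero] at hL
  rw [hL]
  exact if_congr (by rw [Fin.ext_iff]; omega) rfl rfl

lemma JA (s : ℕ) : Jmat (2 ^ s - 1) * (Amat s).transpose = Amat s := by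
  ext i j
  rw [Matrix.mul_apply, Amat_apply]
  have hi := i.isLt
  have hj := j.isLt
  have h1 : (1:ℕ) ≤ 2 ^ s := Nat.one_le_two_pow
  have hj1 : (j:ℕ) + 1 < 2 ^ s := by omega
  set g : ℕ → ZMod 2 := fun m => if ((j:ℕ) + 1) &&& m = 0 then 1 else 0 with hg
  have hterm : ∀ k : Fin (2 ^ s - 1),
      Jmat (2 ^ s - 1) i k * (Amat s).transpose k j =
      (fun m : ℕ => (if m = (i:ℕ) then g m else 0) + (if m = (i:ℕ) + 1 then g m else 0))
        (k : ℕ) := by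
    intro k
    rw [Matrix.transpose_apply, Amat_apply]
    show (if (k:ℕ) = (i:ℕ) ∨ (k:ℕ) = (i:ℕ) + 1 then (1:ZMod 2) else 0) * _ = _
    by_cases hP : (k:ℕ) = (i:ℕ) <;> by_cases hQ : (k:ℕ) = (i:ℕ) + 1 <;>
      simp [hP, hQ, hg] <;> omega
  rw [Finset.sum_congr rfl (fun k _ => hterm k)]
  rw [Fin.sum_univ_eq_sum_range
    (fun m : ℕ => (if m = (i:ℕ) then g m else 0) + (if m = (i:ℕ) + 1 then g m else 0))
    (2 ^ s - 1)]
  rw [Finset.sum_add_distrib, Finset.sum_ite_eq' (Finset.range (2 ^ s - 1)) ((i:ℕ)) g,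
    Finset.sum_ite_eq' (Finset.range (2 ^ s - 1)) ((i:ℕ) + 1) g,
    if_pos (Finset.mem_range.mpr hi)]
  have hsecond : (if (i:ℕ) + 1 ∈ Finset.range (2 ^ s - 1) then g ((i:ℕ) + 1) else 0) =
      g ((i:ℕ) + 1) := by
    by_cases hlt : (i:ℕ) + 1 < 2 ^ s - 1
    · rw [if_pos (Finset.mem_range.mpr hlt)]
    · rw [if_neg (fun hmem => hlt (Finset.mem_range.mp hmem))]
      have hieq : (i:ℕ) + 1 = 2 ^ s - 1 := by omega
      rw [hg]
      simp only [hieq]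
      rw [if_neg]
      rw [land_ones hj1]
      omega
  rw [hsecond, hg]
  have key := L2 ((j:ℕ) + 1) (by omega) (i:ℕ)
  rw [Nat.add_sub_cancel] at key
  rw [key]

theorem stmt_11 (t : ℕ) (ht : 2 ≤ t) :
    IsUnit (Amat (t - 1)) ∧
      Jmat (2 ^ (t - 1) - 1) = Amat (t - 1) * ((Amat (t - 1))⁻¹).transpose := by
  have hAC := AC (t - 1)
  refine ⟨⟨⟨_, _, hAC, mul_eq_one_comm.mp hAC⟩, rfl⟩, ?_⟩
  rw [Matrix.inv_eq_right_inv hAC]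
  have hCA : Cmat (t - 1) * Amat (t - 1) = 1 := mul_eq_one_comm.mp hAC
  have hT : (Amat (t - 1)).transpose * (Cmat (t - 1)).transpose = 1 := by
    rw [← Matrix.transpose_mul, hCA, Matrix.transpose_one]
  calc Jmat (2 ^ (t - 1) - 1)
      = Jmat (2 ^ (t - 1) - 1) * 1 := by rw [Matrix.mul_one]
    _ = Jmat (2 ^ (t - 1) - 1) *
          ((Amat (t - 1)).transpose * (Cmat (t - 1)).transpose) := by rw [hT]
    _ = (Jmat (2 ^ (t - 1) - 1) * (Amat (t - 1)).transpose) *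
          (Cmat (t - 1)).transpose := by rw [Matrix.mul_assoc]
    _ = Amat (t - 1) * (Cmat (t - 1)).transpose := by rw [JA]
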